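/- Let R be a commutative ring. The space Fgn(R) of proper finitely generated ideals of R, with the coarse lower topology, is quasi-compact if and only if every maximal ideal of R is finitely generated. -/

import Mathlib

/-- The coarse lower topology on the set of ideals of a commutative ring. -/
def coarseLowerTopology (R : Type*) [CommRing R] : TopologicalSpace (Ideal R) :=
  TopologicalSpace.generateFrom {U : Set (Ideal R) | ∃ a : Ideal R, U = {i : Ideal R | a ≤ i}ᶜ}

/-- The space of proper finitely generated ideals is quasi-compact iff every
maximal ideal of `R` is finitely generated. -/
theorem fgn_isCompact_iff {R : Type*} [CommRing R] :
    letI := coarseLowerTopology R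
    IsCompact {a : Ideal R | a ≠ ⊤ ∧ a.FG} ↔ ∀ m : Ideal R, m.IsMaximal → m.FG := by
  letI := coarseLowerTopology R
  constructor
  · -- compact → maximal ideals fg
    intro hc m hm
    by_contra hfg
    -- open cover by U x = {i | ¬ span {x} ≤ i}, x ∈ m
    set U : m → Set (Ideal R) := fun x => {i : Ideal R | Ideal.span {(x : R)} ≤ i}ᶜ with hU
    have hopen : ∀ x : m, IsOpen (U x) := fun x =>
      TopologicalSpace.isOpen_generateFrom_of_mem ⟨Ideal.span {(x : R)}, rfl⟩
    have hcov : {a : Ideal R | a ≠ ⊤ ∧ a.FG} ⊆ ⋃ x : m, U x := by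
      intro i hi
      by_cases hmi : m ≤ i
      · rcases (hm.eq_of_le hi.1 hmi).symm ▸ hi.2 with h
        exact absurd h hfg
      · rw [SetLike.le_def] at hmi
        push_neg at hmi
        obtain ⟨x, hxm, hxi⟩ := hmi
        refine Set.mem_iUnion.2 ⟨⟨x, hxm⟩, ?_⟩
        simp only [U, Set.mem_compl_iff, Set.mem_setOf_eq, Ideal.span_le,
          Set.singleton_subset_iff]
        exact hxi
    obtain ⟨t, ht⟩ := hc.elim_finite_subcover U hopen hcov
    -- the ideal generated by the elements of t is proper, fg, and misses the cover
    set j : Ideal R := Ideal.span ((fun x : m => (x : R)) '' (t : Set m)) with hj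
    have hjm : j ≤ m := by
      rw [hj, Ideal.span_le]
      rintro _ ⟨x, -, rfl⟩; exact x.2
    have hjs : j ∈ {a : Ideal R | a ≠ ⊤ ∧ a.FG} := by
      refine ⟨fun h => hm.ne_top (top_le_iff.1 (h ▸ hjm)), ?_⟩
      exact Submodule.fg_span ((t.finite_toSet).image _)
    obtain ⟨x, hxt, hxU⟩ := Set.mem_iUnion₂.1 (ht hjs)
    apply hxU
    simp only [Set.mem_setOf_eq, Ideal.span_le, Set.singleton_subset_iff]
    exact Ideal.subset_span ⟨x, hxt, rfl⟩
  · -- maximal ideals fg → compact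
    intro hmax
    rw [isCompact_iff_ultrafilter_le_nhds]
    intro f hf
    rw [Filter.le_principal_iff] at hf
    set S : Set (Ideal R) := {a : Ideal R | {i : Ideal R | a ≤ i} ∈ f} with hS
    have hbot : (⊥ : Ideal R) ∈ S := by
      have : {i : Ideal R | (⊥ : Ideal R) ≤ i} = Set.univ := by
        ext i; simp
      simp only [hS, Set.mem_setOf_eq, this]
      exact Filter.univ_mem
    have hdir : DirectedOn (· ≤ ·) S := by
      rintro a ha b hb
      refine ⟨a ⊔ b, ?_, le_sup_left, le_sup_right⟩
      have : {i : Ideal R | a ⊔ b ≤ i} = {i | a ≤ i} ∩ {i | b ≤ i} := by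
        ext i; simp [sup_le_iff]
      simpa only [hS, Set.mem_setOf_eq, this, Ultrafilter.mem_coe] using Filter.inter_mem ha hb
    have hne : sSup S ≠ ⊤ := by
      intro h
      have h1 : (1 : R) ∈ sSup S := h ▸ Submodule.mem_top
      obtain ⟨a, haS, ha1⟩ := (Submodule.mem_sSup_of_directed ⟨⊥, hbot⟩ hdir).1 h1
      have hatop : a = ⊤ := Ideal.eq_top_iff_one a |>.2 ha1
      obtain ⟨i, hi1, hi2⟩ := Filter.nonempty_of_mem (Filter.inter_mem (hatop ▸ haS) hf)
      exact hi2.1 (top_le_iff.1 hi1)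
    obtain ⟨m, hm, hsm⟩ := Ideal.exists_le_maximal _ hne
    refine ⟨m, ⟨hm.ne_top, hmax m hm⟩, ?_⟩
    show (f : Filter (Ideal R)) ≤
      @nhds _ (TopologicalSpace.generateFrom
        {U : Set (Ideal R) | ∃ a : Ideal R, U = {i : Ideal R | a ≤ i}ᶜ}) m
    rw [TopologicalSpace.nhds_generateFrom]
    refine le_iInf₂ fun U hU => Filter.le_principal_iff.2 ?_
    obtain ⟨hmU, a, rfl⟩ := hU
    exact Ultrafilter.compl_mem_iff_notMem.2 fun haf => hmU (le_trans (le_sSup (show a ∈ S from haf)) hsm)
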